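/- There exist infinitely many rational numbers c such that the map f_c(z) = z^2 + c has exactly 4 rational preperiodic points, of which exactly 2 are periodic, and both periodic points are fixed points of f_c. (This cardinality and cycle-structure data characterizes the directed graph 4(1,1) of rational preperiodic points, since f_c(z) = f_c(-z).) -/
import Mathlib


/-- The quadratic map `f_c(z) = z² + c`. -/
def fc (c : ℚ) : ℚ → ℚ := fun z => z ^ 2 + c

/-- `x` is preperiodic for `f_c`: its forward orbit is eventually periodic. -/
def IsPreper (c x : ℚ) : Prop := ∃ m n : ℕ, m < n ∧ (fc c)^[m] x = (fc c)^[n] x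

/-- `x` is periodic for `f_c`. -/
def IsPer (c x : ℚ) : Prop := ∃ n : ℕ, 1 ≤ n ∧ (fc c)^[n] x = x

lemma den_add_intCast (x : ℚ) (k : ℤ) : (x + (k:ℚ)).den = x.den := by
  apply Nat.dvd_antisymm
  · have := Rat.add_den_dvd x (k:ℚ)
    simpa using this
  · have := Rat.add_den_dvd (x + (k:ℚ)) ((-k : ℤ):ℚ)
    simpa using this

lemma den_fc (k : ℤ) (x : ℚ) : (fc (k:ℚ) x).den = x.den ^ 2 := by
  have : fc (k:ℚ) x = x * x + (k:ℚ) := by simp only [fc]; ring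
  rw [this, den_add_intCast, Rat.mul_self_den, sq]

lemma den_iterate (k : ℤ) (x : ℚ) (j : ℕ) :
    ((fc (k:ℚ))^[j] x).den = x.den ^ (2 ^ j) := by
  induction j with
  | zero => simp
  | succ j ih =>
    rw [Function.iterate_succ_apply', den_fc, ih, ← pow_mul, pow_succ]

lemma preper_den_one (k : ℤ) (x : ℚ) (h : IsPreper ((k:ℤ):ℚ) x) : x.den = 1 := by
  obtain ⟨m, n, hmn, h⟩ := h
  have hd : x.den ^ (2 ^ m) = x.den ^ (2 ^ n) := by
    rw [← den_iterate k x m, ← den_iterate k x n, h]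
  by_contra hne
  have h1 : 1 < x.den := lt_of_le_of_ne x.pos (Ne.symm hne)
  have : x.den ^ (2 ^ m) < x.den ^ (2 ^ n) :=
    Nat.pow_lt_pow_right h1 (Nat.pow_lt_pow_right one_lt_two hmn)
  omega
/-- integer version of the map for `c = a - a²`. -/
def gI (a : ℤ) : ℤ → ℤ := fun z => z ^ 2 + (a - a ^ 2)

lemma fc_cast (a z : ℤ) : fc ((a - a^2 : ℤ) : ℚ) ((z : ℤ) : ℚ) = ((gI a z : ℤ) : ℚ) := by
  simp only [fc, gI]; push_cast; ring

lemma fc_iterate_cast (a z : ℤ) (k : ℕ) :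
    (fc ((a - a^2 : ℤ) : ℚ))^[k] ((z : ℤ) : ℚ) = (((gI a)^[k] z : ℤ) : ℚ) := by
  induction k with
  | zero => simp
  | succ k ih => rw [Function.iterate_succ_apply', Function.iterate_succ_apply', ih, fc_cast]

lemma orbit_bound (a : ℤ) (ha : 3 ≤ a) (x : ℤ) (m n : ℕ) (hmn : m < n)
    (h : (gI a)^[m] x = (gI a)^[n] x) : ∀ k, |(gI a)^[k] x| ≤ a := by
  set T : Finset ℤ := (Finset.range n).image (fun k => (gI a)^[k] x) with hT
  have hmem : ∀ k, (gI a)^[k] x ∈ T := by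
    intro k
    induction k using Nat.strong_induction_on with
    | _ k ih =>
      by_cases hk : k < n
      · exact Finset.mem_image.2 ⟨k, Finset.mem_range.2 hk, rfl⟩
      · push_neg at hk
        have heq : (gI a)^[k] x = (gI a)^[k - (n - m)] x := by
          calc (gI a)^[k] x = (gI a)^[(k - n) + n] x := by congr 1; omega
            _ = (gI a)^[k - n] ((gI a)^[n] x) := Function.iterate_add_apply _ _ _ _
            _ = (gI a)^[k - n] ((gI a)^[m] x) := by rw [h]
            _ = (gI a)^[(k - n) + m] x := (Function.iterate_add_apply _ _ _ _).symm
            _ = (gI a)^[k - (n - m)] x := by congr 1; omega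
        rw [heq]
        exact ih _ (by omega)
  obtain ⟨y, hyT, hymax⟩ := T.exists_max_image (fun z => |z|) ⟨x, by simpa using hmem 0⟩
  obtain ⟨k, -, hk⟩ := Finset.mem_image.1 hyT
  have hgy : gI a y ∈ T := by
    have : gI a y = (gI a)^[k + 1] x := by rw [Function.iterate_succ_apply', hk]
    rw [this]; exact hmem (k + 1)
  have h1 : |gI a y| ≤ |y| := hymax _ hgy
  have h2 : |y| ≤ a := by
    by_contra hc
    push_neg at hc
    simp only [gI] at h1
    have hy1 : y ^ 2 + (a - a ^ 2) ≤ |y| := (abs_le.1 h1).2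
    have hy2 : y ^ 2 = |y| ^ 2 := (sq_abs y).symm
    nlinarith [abs_nonneg y, hy1, hy2, hc]
  intro j
  exact le_trans (hymax _ (hmem j)) h2

lemma classify (a : ℤ) (ha : 3 ≤ a) (x : ℤ) (m n : ℕ) (hmn : m < n)
    (h : (gI a)^[m] x = (gI a)^[n] x) :
    x = a ∨ x = -a ∨ x = a - 1 ∨ x = 1 - a := by
  have hb := orbit_bound a ha x m n hmn h
  have h0 : |x| ≤ a := by simpa using hb 0
  have h1 : |x ^ 2 + (a - a ^ 2)| ≤ a := by simpa [gI] using hb 1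
  have h0' := abs_le.1 h0
  have h1' := abs_le.1 h1
  have hnot : ¬ (|x| ≤ a - 2) := by
    intro hle
    have := abs_le.1 hle
    nlinarith [this.1, this.2, h1'.1]
  rw [abs_le] at hnot
  push_neg at hnot
  rcases le_or_gt x 0 with hx | hx
  · rcases abs_cases x with ⟨h', -⟩ | ⟨h', -⟩ <;> omega
  · rcases abs_cases x with ⟨h', -⟩ | ⟨h', -⟩ <;> omega

section Key
variable (a : ℤ)

noncomputable def Cq (a : ℤ) : ℚ := ((a - a ^ 2 : ℤ) : ℚ)

lemma hfa : fc (Cq a) ((a:ℤ):ℚ) = ((a:ℤ):ℚ) := by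
  simp only [fc, Cq]; push_cast; ring

lemma hfna : fc (Cq a) (-((a:ℤ):ℚ)) = ((a:ℤ):ℚ) := by
  simp only [fc, Cq]; push_cast; ring

lemma hfb : fc (Cq a) (1 - ((a:ℤ):ℚ)) = 1 - ((a:ℤ):ℚ) := by
  simp only [fc, Cq]; push_cast; ring

lemma hfab : fc (Cq a) (((a:ℤ):ℚ) - 1) = 1 - ((a:ℤ):ℚ) := by
  simp only [fc, Cq]; push_cast; ring

lemma preper_set (ha : 3 ≤ a) :
    {x : ℚ | IsPreper (Cq a) x} =
      {((a:ℤ):ℚ), -((a:ℤ):ℚ), ((a:ℤ):ℚ) - 1, 1 - ((a:ℤ):ℚ)} := by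
  ext x
  simp only [Set.mem_setOf_eq, Set.mem_insert_iff, Set.mem_singleton_iff]
  constructor
  · intro hx
    have hden : x.den = 1 := preper_den_one (a - a ^ 2) x hx
    have hxz : ((x.num : ℤ) : ℚ) = x := (Rat.den_eq_one_iff x).1 hden
    obtain ⟨m, n, hmn, h⟩ := hx
    rw [← hxz] at h
    simp only [Cq] at h
    rw [fc_iterate_cast, fc_iterate_cast] at h
    have hz : (gI a)^[m] x.num = (gI a)^[n] x.num := by exact_mod_cast h
    rcases classify a ha x.num m n hmn hz with h' | h' | h' | h'
    · left; rw [← hxz, h']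
    · right; left; rw [← hxz, h']; push_cast; ring
    · right; right; left; rw [← hxz, h']; push_cast; ring
    · right; right; right; rw [← hxz, h']; push_cast; ring
  · have h2 : ∀ y : ℚ, fc (Cq a) y = ((a:ℤ):ℚ) → IsPreper (Cq a) y := by
      intro y hy
      exact ⟨1, 2, one_lt_two, by
        simp only [Function.iterate_one, Function.iterate_succ, Function.iterate_zero,
          Function.comp_apply, id_eq, hy, hfa]⟩
    rintro (rfl | rfl | rfl | rfl)
    · exact ⟨1, 2, one_lt_two, by
        simp only [Function.iterate_one, Function.iterate_succ, Function.iterate_zero,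
          Function.comp_apply, id_eq, hfa]⟩
    · exact h2 _ (hfna a)
    · exact ⟨1, 2, one_lt_two, by
        simp only [Function.iterate_one, Function.iterate_succ, Function.iterate_zero,
          Function.comp_apply, id_eq, hfab, hfb]⟩
    · exact ⟨1, 2, one_lt_two, by
        simp only [Function.iterate_one, Function.iterate_succ, Function.iterate_zero,
          Function.comp_apply, id_eq, hfb]⟩

lemma per_set (ha : 3 ≤ a) :
    {x : ℚ | IsPer (Cq a) x} = {((a:ℤ):ℚ), 1 - ((a:ℤ):ℚ)} := by
  have h3 : (3:ℚ) ≤ ((a:ℤ):ℚ) := by exact_mod_cast ha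
  ext x
  simp only [Set.mem_setOf_eq, Set.mem_insert_iff, Set.mem_singleton_iff]
  constructor
  · intro hx
    obtain ⟨n, hn1, hn⟩ := hx
    have hpre : IsPreper (Cq a) x := ⟨0, n, hn1, by simpa using hn.symm⟩
    have hx4 := (preper_set a ha).subset hpre
    simp only [Set.mem_insert_iff, Set.mem_singleton_iff] at hx4
    have hiter : ∀ (y z : ℚ), fc (Cq a) y = z → fc (Cq a) z = z →
        (fc (Cq a))^[n] y = z := by
      intro y z h1 h2
      obtain ⟨j, rfl⟩ : ∃ j, n = j + 1 := ⟨n - 1, by omega⟩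
      rw [Function.iterate_succ_apply, h1, Function.iterate_fixed h2]
    rcases hx4 with rfl | rfl | rfl | rfl
    · exact Or.inl rfl
    · exfalso
      have := hiter _ _ (hfna a) (hfa a)
      rw [hn] at this
      linarith
    · exfalso
      have := hiter _ _ (hfab a) (hfb a)
      rw [hn] at this
      linarith
    · exact Or.inr rfl
  · rintro (rfl | rfl)
    · exact ⟨1, le_refl 1, by simpa using hfa a⟩
    · exact ⟨1, le_refl 1, by simpa using hfb a⟩

lemma key (ha : 3 ≤ a) :
    {x : ℚ | IsPreper (Cq a) x}.ncard = 4 ∧ {x : ℚ | IsPer (Cq a) x}.ncard = 2 ∧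
      ∀ x : ℚ, IsPer (Cq a) x → fc (Cq a) x = x := by
  have h3 : (3:ℚ) ≤ ((a:ℤ):ℚ) := by exact_mod_cast ha
  refine ⟨?_, ?_, ?_⟩
  · rw [preper_set a ha]
    rw [Set.ncard_insert_of_notMem (by
        simp only [Set.mem_insert_iff, Set.mem_singleton_iff]
        push_neg
        refine ⟨by intro h; linarith, by intro h; linarith, by intro h; linarith⟩)
      (((Set.finite_singleton _).insert _).insert _)]
    rw [Set.ncard_insert_of_notMem (by
        simp only [Set.mem_insert_iff, Set.mem_singleton_iff]
        push_neg
        refine ⟨by intro h; linarith, by intro h; linarith⟩)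
      ((Set.finite_singleton _).insert _)]
    rw [Set.ncard_pair (by intro h; linarith)]
  · rw [per_set a ha, Set.ncard_pair (by intro h; linarith)]
  · intro x hx
    have := (per_set a ha).subset hx
    simp only [Set.mem_insert_iff, Set.mem_singleton_iff] at this
    rcases this with rfl | rfl
    · exact hfa a
    · exact hfb a

end Key

theorem graph_4_1_1 :
    {c : ℚ | {x : ℚ | IsPreper c x}.ncard = 4 ∧ {x : ℚ | IsPer c x}.ncard = 2 ∧
      ∀ x : ℚ, IsPer c x → fc c x = x}.Infinite := by
  apply Set.infinite_of_injective_forall_mem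
    (f := fun n : ℕ => Cq ((n : ℤ) + 3))
  · intro p q h
    simp only [Cq] at h
    have hZ : ((p:ℤ) + 3) - ((p:ℤ) + 3) ^ 2 = ((q:ℤ) + 3) - ((q:ℤ) + 3) ^ 2 := by
      exact_mod_cast h
    have h2 : (((p:ℤ)) - q) * ((p:ℤ) + q + 5) = 0 := by linear_combination -hZ
    rcases mul_eq_zero.1 h2 with h' | h'
    · have : (p:ℤ) = q := by omega
      exact_mod_cast this
    · have hp : 0 ≤ (p:ℤ) := Int.natCast_nonneg p
      have hq : 0 ≤ (q:ℤ) := Int.natCast_nonneg q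
      omega
  · intro n
    exact key ((n:ℤ) + 3) (by omega)
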